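/- Let N and M be well-formed labeled portnets and let (M,φ) be a partial mirror of N. Let S = compose({N,M}) with initial marking i_S = i_N + i_M. For any markings m, m', m_0, …, m_n reachable from i_S and all transitions t, t_1, …, t_n of N such that m = m_0 →t_1 … →t_n m_n, where each λ(t_i) = receive, and m →t m' with λ(t) = send, there exist markings m_0', …, m_n' reachable from i_S and transitions t̄, t_1', …, t_n' of N such that m' = m_0' →t_1' … →t_n' m_n' and m_n →t̄ m_n', with μ(t_i) = μ(t_i') and λ(t_i) = λ(t_i') for all i, and μ(t) = μ(t̄) and λ(t) = λ(t̄). -/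
import Mathlib


namespace PortNets

/-- Direction of communication of a transition: send, receive, or internal (τ). -/
inductive Dir : Type
  | send | receive | tau
deriving DecidableEq

/-- Preset of a node `x` with respect to a flow relation `F`. -/
def pre {Node : Type} (F : Set (Node × Node)) (x : Node) : Set Node := {y | (y, x) ∈ F}

/-- Postset of a node `x` with respect to a flow relation `F`. -/
def post {Node : Type} (F : Set (Node × Node)) (x : Node) : Set Node := {y | (x, y) ∈ F}

/-- Raw data of an open Petri net (with labels): internal places `P`, input places `I`,
output places `O`, transitions `T`, flow `F`, initial and final places, labeling `μ`. -/
structure OPN (Node L : Type) where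
  P : Set Node
  I : Set Node
  O : Set Node
  T : Set Node
  F : Set (Node × Node)
  init : Set Node
  fin : Set Node
  μ : Node → L

variable {Node L : Type}

/-- All places of an OPN. -/
def OPN.places (N : OPN Node L) : Set Node := N.P ∪ N.I ∪ N.O

/-- All nodes of an OPN. -/
def OPN.nodes (N : OPN Node L) : Set Node := N.places ∪ N.T

/-- Structural requirements of an open Petri net. -/
structure IsOPN (N : OPN Node L) : Prop where
  disjPI : N.P ∩ N.I = ∅
  disjPO : N.P ∩ N.O = ∅
  disjIO : N.I ∩ N.O = ∅
  disjPT : N.places ∩ N.T = ∅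
  flow_sub : N.F ⊆ (N.places ×ˢ N.T) ∪ (N.T ×ˢ N.places)
  no_pre_I : ∀ x ∈ N.I, pre N.F x = ∅
  no_post_O : ∀ x ∈ N.O, post N.F x = ∅
  not_both : ∀ t ∈ N.T, ¬((pre N.F t ∩ N.I).Nonempty ∧ (post N.F t ∩ N.O).Nonempty)
  init_sub : N.init ⊆ N.P
  fin_sub : N.fin ⊆ N.P

open Classical in
noncomputable def dir (N : OPN Node L) (t : Node) : Dir :=
  if (post N.F t ∩ N.O).Nonempty then Dir.send
  else if (pre N.F t ∩ N.I).Nonempty then Dir.receive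
  else Dir.tau

open Classical in
noncomputable def fireAt (F : Set (Node × Node)) (m : Node → ℕ) (t : Node) : Node → ℕ :=
  fun p => m p - (if (p, t) ∈ F then 1 else 0) + (if (t, p) ∈ F then 1 else 0)

/-- `Fires T F m t m'`: transition `t` is enabled in marking `m` and firing it yields `m'`. -/
def Fires (T : Set Node) (F : Set (Node × Node)) (m : Node → ℕ) (t : Node)
    (m' : Node → ℕ) : Prop :=
  t ∈ T ∧ (∀ p, (p, t) ∈ F → 1 ≤ m p) ∧ m' = fireAt F m t

/-- Firing a finite sequence of transitions. -/
inductive FireSeq (T : Set Node) (F : Set (Node × Node)) :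
    (Node → ℕ) → List Node → (Node → ℕ) → Prop
  | nil (m : Node → ℕ) : FireSeq T F m [] m
  | cons {m m' m'' : Node → ℕ} {t : Node} {σ : List Node} :
      Fires T F m t m' → FireSeq T F m' σ m'' → FireSeq T F m (t :: σ) m''

/-- Reachability of markings. -/
def Reach (T : Set Node) (F : Set (Node × Node)) (m m' : Node → ℕ) : Prop :=
  ∃ σ : List Node, FireSeq T F m σ m'

/-- Weak termination: from every marking reachable from `m0`, the marking `mf` is reachable. -/
def WeaklyTerminates (T : Set Node) (F : Set (Node × Node)) (m0 mf : Node → ℕ) : Prop :=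
  ∀ m, Reach T F m0 m → Reach T F m mf

/-- The marking putting one token on each element of a set of places. -/
noncomputable def mark (s : Set Node) : Node → ℕ := s.indicator fun _ => 1

/-- Flow relation of the skeleton: all arcs not adjacent to interface places. -/
def skF (N : OPN Node L) : Set (Node × Node) :=
  {x ∈ N.F | x.1 ∉ N.I ∪ N.O ∧ x.2 ∉ N.I ∪ N.O}

/-- The skeleton is a state machine: each transition has at most one place in its
preset and at most one in its postset. -/
def IsSM (N : OPN Node L) : Prop :=
  ∀ t ∈ N.T, (pre (skF N) t).Subsingleton ∧ (post (skF N) t).Subsingleton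

/-- `x` lies on a path from `i` to `f` w.r.t. flow `F`. -/
def OnPath (F : Set (Node × Node)) (i f x : Node) : Prop :=
  ∃ l : List Node, l ≠ [] ∧ List.Chain' (fun a b => (a, b) ∈ F) l ∧
    l.head? = some i ∧ l.getLast? = some f ∧ x ∈ l

/-- Workflow net (with places `P`, transitions `T`, flow `F`): `i` is the unique place with
empty preset, `f` the unique place with empty postset, and every node is on a path
from `i` to `f`. -/
def IsWFNOn (P T : Set Node) (F : Set (Node × Node)) (i f : Node) : Prop :=
  i ∈ P ∧ f ∈ P ∧ pre F i = ∅ ∧ post F f = ∅ ∧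
    (∀ p ∈ P, pre F p = ∅ → p = i) ∧
    (∀ p ∈ P, post F p = ∅ → p = f) ∧
    (∀ x ∈ P ∪ T, OnPath F i f x)

/-- Transition `t` is connected (by an arc, in either direction) to node `x`. -/
def connected (N : OPN Node L) (t x : Node) : Prop := (x, t) ∈ N.F ∨ (t, x) ∈ N.F

/-- A labeled portnet: an OPN whose skeleton is a state-machine workflow net, with
singleton `init` and `fin`, every transition connected to exactly one interface place,
transitions sharing an interface place sharing a label, and transitions sharing a
label sharing their interface place connections. -/
structure IsPortnet (N : OPN Node L) : Prop where
  isOPN : IsOPN N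
  isSM : IsSM N
  init_single : ∃ i, N.init = {i}
  fin_single : ∃ f, N.fin = {f}
  isWFN : ∀ i f, N.init = {i} → N.fin = {f} → IsWFNOn N.P N.T (skF N) i f
  one_iface : ∀ t ∈ N.T, ∃! x, x ∈ N.I ∪ N.O ∧ connected N t x
  same_iface_label : ∀ x ∈ N.I ∪ N.O, ∀ t t', t ∈ N.T → t' ∈ N.T →
    connected N t x → connected N t' x → N.μ t = N.μ t'
  same_label_iface : ∀ t ∈ N.T, ∀ t' ∈ N.T, N.μ t = N.μ t' →
    ∀ x ∈ N.I ∪ N.O, (connected N t x ↔ connected N t' x)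

/-- Observable choices: distinct transitions in the postset of a place have distinct labels. -/
def ObservableChoices (N : OPN Node L) : Prop :=
  ∀ p ∈ N.P, ∀ t ∈ post N.F p, ∀ t' ∈ post N.F p, t ≠ t' → N.μ t ≠ N.μ t'

/-- Choice property: all transitions in the postset of a place have the same direction. -/
def ChoiceProp (N : OPN Node L) : Prop :=
  ∀ p ∈ N.P, ∀ t ∈ post N.F p, ∀ t' ∈ post N.F p, dir N t = dir N t'

/-- Diamond property. -/
def DiamondProp (N : OPN Node L) : Prop :=
  ∀ p ∈ N.P, ∀ t ∈ post N.F p, ∀ t' ∈ post N.F p, dir N t ≠ dir N t' →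
    ∀ q ∈ post (skF N) t, ∀ q' ∈ post (skF N) t',
      ∃ u ∈ post (skF N) q, ∃ u' ∈ post (skF N) q',
        (post (skF N) u ∩ post (skF N) u').Nonempty ∧
        N.μ t = N.μ u' ∧ N.μ t' = N.μ u

/-- Loop property. -/
def LoopProp (N : OPN Node L) : Prop :=
  ∀ p ∈ N.P, ∀ t ∈ post N.F p, ∀ t' ∈ post N.F p, t ≠ t' → dir N t = dir N t' →
    ∀ (l : List Node) (t'' : Node),
      List.Chain' (fun a b => (a, b) ∈ N.F) (p :: t :: (l ++ [t''])) →
      t'' ∈ N.T → N.μ t'' = N.μ t' →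
      (∀ u ∈ l, u ∈ N.T → N.μ u ≠ N.μ t') →
      ∃ v ∈ t :: (l ++ [t'']), v ∈ N.T ∧ dir N v ≠ dir N t

/-- Well-formed labeled portnet. -/
def WellFormed (N : OPN Node L) : Prop :=
  IsPortnet N ∧ ObservableChoices N ∧ DiamondProp N ∧ LoopProp N

/-- `(M, φ)` is a partial mirror of the labeled portnet `N`. -/
structure IsPartialMirror (N M : OPN Node L) (φ : Node → Node) : Prop where
  portN : IsPortnet N
  portM : IsPortnet M
  inj : Set.InjOn φ M.nodes
  mapsP : ∀ x ∈ M.P, φ x ∈ N.P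
  mapsT : ∀ x ∈ M.T, φ x ∈ N.T
  mapsI : ∀ x ∈ M.I, φ x ∈ N.O
  mapsO : ∀ x ∈ M.O, φ x ∈ N.I
  flow_same : ∀ x y, (x, y) ∈ M.F → x ∉ M.I → y ∉ M.O → (φ x, φ y) ∈ N.F
  flow_rev : ∀ x y, (x, y) ∈ M.F → (x ∈ M.I ∨ y ∈ M.O) → (φ y, φ x) ∈ N.F
  init_eq : φ '' M.init = N.init
  fin_eq : φ '' M.fin = N.fin
  lab : ∀ t ∈ M.T, M.μ t = N.μ (φ t)
  send_cover : ∀ p ∈ M.P, ∀ t, (φ p, t) ∈ N.F → dir N t = Dir.send →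
    ∃ t', (p, t') ∈ M.F ∧ φ t' = t

/-- Composability of two OPNs. -/
def Composable (N M : OPN Node L) : Prop :=
  (N.nodes ∩ M.nodes = (N.I ∪ N.O) ∩ (M.I ∪ M.O)) ∧
  (((N.I ∩ M.O) ∪ (M.I ∩ N.O)).Nonempty →
    N.O ⊆ M.I ∧ M.O ⊆ N.I ∧ N.I ∩ M.I = ∅ ∧ N.O ∩ M.O = ∅)

open Classical in
noncomputable def compose2 (N M : OPN Node L) : OPN Node L where
  P := N.P ∪ M.P ∪ ((N.I ∪ M.I) ∩ (N.O ∪ M.O))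
  I := (N.I ∪ M.I) \ (N.O ∪ M.O)
  O := (N.O ∪ M.O) \ (N.I ∪ M.I)
  T := N.T ∪ M.T
  F := N.F ∪ M.F
  init := N.init ∪ M.init
  fin := N.fin ∪ M.fin
  μ := fun x => if x ∈ N.T then N.μ x else M.μ x

end PortNets

namespace PortNets

variable {Node L : Type}

lemma chain'_succ {α : Type} {R : α → α → Prop} (l : List α) (hc : l.Chain' R)
    (x : α) (hx : x ∈ l) (hlast : l.getLast? ≠ some x) : ∃ y, R x y := by
  induction l with
  | nil => simp at hx
  | cons a tl ih =>
    cases tl with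
    | nil =>
      simp at hx
      subst hx
      simp at hlast
    | cons b tl' =>
      rcases List.mem_cons.mp hx with rfl | hx'
      · exact ⟨b, (List.isChain_cons_cons.mp hc).1⟩
      · exact ih (List.isChain_cons_cons.mp hc).2 hx'
          (by simpa [List.getLast?_cons_cons] using hlast)

lemma disj_notmem {s t : Set Node} (h : s ∩ t = ∅) {x} (hx : x ∈ s) (hx' : x ∈ t) : False := by
  rw [Set.eq_empty_iff_forall_notMem] at h; exact h x ⟨hx, hx'⟩

lemma t_not_place {N : OPN Node L} (h : IsOPN N) {t} (ht : t ∈ N.T) : t ∉ N.places :=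
  fun hp => disj_notmem h.disjPT hp ht

lemma iface_sub_places {N : OPN Node L} {x} (hx : x ∈ N.I ∪ N.O) : x ∈ N.places :=
  hx.elim (fun h => Or.inl (Or.inr h)) Or.inr

lemma pre_cases {N : OPN Node L} (h : IsOPN N) {t z} (ht : t ∈ N.T) (hz : (z, t) ∈ N.F) :
    (z ∈ N.P ∧ (z, t) ∈ skF N) ∨ (z ∈ N.I ∧ connected N t z) := by
  have hzp : z ∈ N.places := by
    rcases h.flow_sub hz with h1 | h1
    · exact h1.1
    · exact absurd h1.2 (t_not_place h ht)
  rcases hzp with (hzP | hzI) | hzO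
  · left
    refine ⟨hzP, hz, ?_, ?_⟩
    · intro hc
      rcases hc with hc | hc
      · exact disj_notmem h.disjPI hzP hc
      · exact disj_notmem h.disjPO hzP hc
    · intro hc
      exact t_not_place h ht (iface_sub_places hc)
  · right; exact ⟨hzI, Or.inl hz⟩
  · exact absurd (show t ∈ post N.F z from hz) (by rw [h.no_post_O z hzO]; simp)

lemma post_cases {N : OPN Node L} (h : IsOPN N) {t z} (ht : t ∈ N.T) (hz : (t, z) ∈ N.F) :
    (z ∈ N.P ∧ (t, z) ∈ skF N) ∨ (z ∈ N.O ∧ connected N t z) := by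
  have hzp : z ∈ N.places := by
    rcases h.flow_sub hz with h1 | h1
    · exact absurd h1.1 (t_not_place h ht)
    · exact h1.2
  rcases hzp with (hzP | hzI) | hzO
  · left
    refine ⟨hzP, hz, ?_, ?_⟩
    · intro hc
      exact t_not_place h ht (iface_sub_places hc)
    · intro hc
      rcases hc with hc | hc
      · exact disj_notmem h.disjPI hzP hc
      · exact disj_notmem h.disjPO hzP hc
  · exact absurd (show t ∈ pre N.F z from hz) (by rw [h.no_pre_I z hzI]; simp)
  · right; exact ⟨hzO, Or.inr hz⟩

lemma skF_sub {N : OPN Node L} {a b} (h : (a, b) ∈ skF N) : (a, b) ∈ N.F := h.1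

lemma skel_post_P {N : OPN Node L} (h : IsOPN N) {t z} (ht : t ∈ N.T) (hz : (t, z) ∈ skF N) :
    z ∈ N.P := by
  rcases post_cases h ht hz.1 with h1 | h1
  · exact h1.1
  · exact absurd (Or.inr h1.1) hz.2.2

lemma post_of_P_T {N : OPN Node L} (h : IsOPN N) {q u} (hq : q ∈ N.P) (hu : (q, u) ∈ N.F) :
    u ∈ N.T := by
  rcases h.flow_sub hu with h1 | h1
  · exact h1.2
  · exact absurd h1.1 (fun hc => disj_notmem h.disjPT (Or.inl (Or.inl hq)) hc)

lemma dir_eq_send {N : OPN Node L} {t : Node} :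
    dir N t = Dir.send ↔ (post N.F t ∩ N.O).Nonempty := by
  unfold dir; split_ifs <;> simp_all

lemma dir_eq_receive {N : OPN Node L} {t : Node} :
    dir N t = Dir.receive ↔ ¬(post N.F t ∩ N.O).Nonempty ∧ (pre N.F t ∩ N.I).Nonempty := by
  unfold dir; split_ifs <;> simp_all

lemma exists_skel_post {N : OPN Node L} (hN : IsPortnet N) {t} (ht : t ∈ N.T) :
    ∃ q, (t, q) ∈ skF N := by
  obtain ⟨i, hi⟩ := hN.init_single
  obtain ⟨f, hf⟩ := hN.fin_single
  have hwfn := hN.isWFN i f hi hf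
  obtain ⟨l, hne, hchain, hhead, hlast, hmem⟩ := hwfn.2.2.2.2.2.2 t (Or.inr ht)
  have htf : t ≠ f := by
    rintro rfl
    exact t_not_place hN.isOPN ht (Or.inl (Or.inl hwfn.2.1))
  exact chain'_succ l hchain t hmem
    (by rw [hlast]; exact fun h => htf (Option.some.inj h).symm)

lemma comp_pre {N M : OPN Node L} (hN : IsOPN N) (hM : IsOPN M) (hcomp : Composable N M)
    {u z : Node} (hu : u ∈ N.T) (h : (z, u) ∈ (compose2 N M).F) : (z, u) ∈ N.F := by
  rcases h with h | h
  · exact h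
  · exfalso
    have humem : u ∈ M.nodes := by
      rcases hM.flow_sub h with h1 | h1
      · exact Or.inr h1.2
      · exact Or.inl h1.2
    have h2 : u ∈ (N.I ∪ N.O) ∩ (M.I ∪ M.O) := by
      rw [← hcomp.1]; exact ⟨Or.inr hu, humem⟩
    exact t_not_place hN hu (iface_sub_places h2.1)

lemma comp_post {N M : OPN Node L} (hN : IsOPN N) (hM : IsOPN M) (hcomp : Composable N M)
    {u z : Node} (hu : u ∈ N.T) (h : (u, z) ∈ (compose2 N M).F) : (u, z) ∈ N.F := by
  rcases h with h | h
  · exact h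
  · exfalso
    have humem : u ∈ M.nodes := by
      rcases hM.flow_sub h with h1 | h1
      · exact Or.inl h1.1
      · exact Or.inr h1.1
    have h2 : u ∈ (N.I ∪ N.O) ∩ (M.I ∪ M.O) := by
      rw [← hcomp.1]; exact ⟨Or.inr hu, humem⟩
    exact t_not_place hN hu (iface_sub_places h2.1)

set_option maxHeartbeats 1000000 in
lemma fire_comm {Node : Type} (F : Set (Node × Node)) (m : Node → ℕ) (t t1 u u' p q q' r x y : Node)
    (hpre_t : ∀ z, (z, t) ∈ F ↔ z = p)
    (hpost_t : ∀ z, (t, z) ∈ F ↔ z = q ∨ z = y)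
    (hpre_t1 : ∀ z, (z, t1) ∈ F ↔ z = p ∨ z = x)
    (hpost_t1 : ∀ z, (t1, z) ∈ F ↔ z = q')
    (hpre_u : ∀ z, (z, u) ∈ F ↔ z = q ∨ z = x)
    (hpost_u : ∀ z, (u, z) ∈ F ↔ z = r)
    (hpre_u' : ∀ z, (z, u') ∈ F ↔ z = q')
    (hpost_u' : ∀ z, (u', z) ∈ F ↔ z = r ∨ z = y)
    (hmp : 1 ≤ m p) (hmx : 1 ≤ m x)
    (hpx : p ≠ x) (hqx : q ≠ x) (hq'x : q' ≠ x) (hrx : r ≠ x)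
    (hpy : p ≠ y) (hqy : q ≠ y) (hq'y : q' ≠ y) (hry : r ≠ y) (hxy : x ≠ y) :
    fireAt F (fireAt F m t) u = fireAt F (fireAt F m t1) u' := by
  funext z
  simp only [fireAt, hpre_t, hpost_t, hpre_t1, hpost_t1, hpre_u, hpost_u, hpre_u', hpost_u']
  rcases eq_or_ne z p with rfl | h1 <;>
    rcases eq_or_ne z q with rfl | h2 <;>
    rcases eq_or_ne z q' with rfl | h3 <;>
    rcases eq_or_ne z r with rfl | h4 <;>
    rcases eq_or_ne z x with rfl | h5 <;>
    rcases eq_or_ne z y with rfl | h6 <;>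
    simp_all

theorem diamond_ind {Node L : Type} (N M : OPN Node L)
    (hN : WellFormed N) (hM : WellFormed M) (hcomp : Composable N M) :
    ∀ (ts : List Node) (m mn m' : Node → ℕ) (t : Node),
      FireSeq (compose2 N M).T (compose2 N M).F m ts mn →
      (∀ x ∈ ts, x ∈ N.T) → (∀ x ∈ ts, dir N x = Dir.receive) →
      t ∈ N.T → dir N t = Dir.send →
      Fires (compose2 N M).T (compose2 N M).F m t m' →
      ∃ (mn' : Node → ℕ) (ts' : List Node) (tbar : Node),
        FireSeq (compose2 N M).T (compose2 N M).F m' ts' mn' ∧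
        Fires (compose2 N M).T (compose2 N M).F mn tbar mn' ∧
        tbar ∈ N.T ∧ N.μ t = N.μ tbar ∧ dir N t = dir N tbar ∧
        List.Forall₂ (fun a b => b ∈ N.T ∧ N.μ a = N.μ b ∧ dir N a = dir N b) ts ts' := by
  classical
  have hportN : IsPortnet N := hN.1
  have hopnN : IsOPN N := hportN.isOPN
  have hopnM : IsOPN M := hM.1.isOPN
  have hsm := hportN.isSM
  intro ts
  induction ts with
  | nil =>
    intro m mn m' t hseq _ _ htN htsend hfire
    cases hseq
    exact ⟨m', [], t, FireSeq.nil m', hfire, htN, rfl, rfl, List.Forall₂.nil⟩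
  | cons t1 rest ih =>
    intro m mn m' t hseq htsN htsrec htN htsend hfire
    cases hseq with
    | @cons _ m1 _ _ _ hf1 hseq' =>
    have ht1N : t1 ∈ N.T := htsN t1 (by simp)
    have ht1rec : dir N t1 = Dir.receive := htsrec t1 (by simp)
    have htsN' : ∀ x ∈ rest, x ∈ N.T := fun x hx => htsN x (List.mem_cons_of_mem _ hx)
    have htsrec' : ∀ x ∈ rest, dir N x = Dir.receive :=
      fun x hx => htsrec x (List.mem_cons_of_mem _ hx)
    obtain ⟨htS, hen, hm'⟩ := hfire
    obtain ⟨ht1S, hen1, hm1⟩ := hf1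
    by_cases hconf : ∃ z, (z, t) ∈ (compose2 N M).F ∧ (z, t1) ∈ (compose2 N M).F
    · -- diamond case
      obtain ⟨p, hpt, hpt1⟩ := hconf
      have hptN : (p, t) ∈ N.F := comp_pre hopnN hopnM hcomp htN hpt
      have hpt1N : (p, t1) ∈ N.F := comp_pre hopnN hopnM hcomp ht1N hpt1
      obtain ⟨y, hyp, hyO⟩ := dir_eq_send.mp htsend
      obtain ⟨hnoO1, x, hxpre, hxI⟩ := dir_eq_receive.mp ht1rec
      -- p is the skeleton pre-place of both t and t1
      have hpsk_t : p ∈ N.P ∧ (p, t) ∈ skF N := by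
        rcases pre_cases hopnN htN hptN with h1 | h1
        · exact h1
        · exact absurd ⟨⟨p, hptN, h1.1⟩, ⟨y, hyp, hyO⟩⟩ (hopnN.not_both t htN)
      have hpP : p ∈ N.P := hpsk_t.1
      have hpsk_t1 : (p, t1) ∈ skF N := by
        rcases pre_cases hopnN ht1N hpt1N with h1 | h1
        · exact h1.2
        · exact absurd hpP (fun hc => disj_notmem hopnN.disjPI hc h1.1)
      obtain ⟨q, hq⟩ := exists_skel_post hportN htN
      obtain ⟨q', hq'⟩ := exists_skel_post hportN ht1N
      have hdia := hN.2.2.1 p hpP t hptN t1 hpt1N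
        (by rw [htsend, ht1rec]; simp) q hq q' hq'
      obtain ⟨u, hqu, u', hq'u', ⟨r, hru, hru'⟩, hmu_tu', hmu_t1u⟩ := hdia
      have hqP : q ∈ N.P := skel_post_P hopnN htN hq
      have hq'P : q' ∈ N.P := skel_post_P hopnN ht1N hq'
      have huT : u ∈ N.T := post_of_P_T hopnN hqP hqu.1
      have hu'T : u' ∈ N.T := post_of_P_T hopnN hq'P hq'u'.1
      have hrP : r ∈ N.P := skel_post_P hopnN huT hru
      -- u is connected to x (receive), u' to y (send)
      have hconn_t1x : connected N t1 x := Or.inl hxpre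
      have hconn_ux : connected N u x :=
        (hportN.same_label_iface t1 ht1N u huT hmu_t1u x (Or.inl hxI)).mp hconn_t1x
      have hxu : (x, u) ∈ N.F := by
        rcases hconn_ux with h | h
        · exact h
        · exact absurd (show u ∈ pre N.F x from h) (by rw [hopnN.no_pre_I x hxI]; simp)
      have hconn_ty : connected N t y := Or.inr hyp
      have hconn_u'y : connected N u' y :=
        (hportN.same_label_iface t htN u' hu'T hmu_tu' y (Or.inr hyO)).mp hconn_ty
      have hu'y : (u', y) ∈ N.F := by
        rcases hconn_u'y with h | h
        · exact absurd (show u' ∈ post N.F y from h) (by rw [hopnN.no_post_O y hyO]; simp)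
        · exact h
      -- directions
      have hpostuO : ¬(post N.F u ∩ N.O).Nonempty := by
        rintro ⟨z, hz, hzO⟩
        rcases post_cases hopnN huT hz with ⟨hzP, _⟩ | ⟨hzO', hconn⟩
        · exact disj_notmem hopnN.disjPO hzP hzO
        · obtain ⟨w, hw, huniq⟩ := hportN.one_iface u huT
          have h1 : z = w := huniq z ⟨Or.inr hzO', hconn⟩
          have h2 : x = w := huniq x ⟨Or.inl hxI, hconn_ux⟩
          exact disj_notmem hopnN.disjIO (h1.trans h2.symm ▸ hxI) hzO
      have hdiru : dir N u = Dir.receive := dir_eq_receive.mpr ⟨hpostuO, ⟨x, hxu, hxI⟩⟩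
      have hdiru' : dir N u' = Dir.send := dir_eq_send.mpr ⟨y, hu'y, hyO⟩
      -- distinctness across place classes
      have hne_PI : ∀ a b : Node, a ∈ N.P → b ∈ N.I → a ≠ b :=
        fun a b ha hb h => disj_notmem hopnN.disjPI ha (h ▸ hb)
      have hne_PO : ∀ a b : Node, a ∈ N.P → b ∈ N.O → a ≠ b :=
        fun a b ha hb h => disj_notmem hopnN.disjPO ha (h ▸ hb)
      have hxy : x ≠ y := fun h => disj_notmem hopnN.disjIO hxI (h ▸ hyO)
      -- pre/post characterizations in the composed net
      have hpre_t : ∀ z, (z, t) ∈ (compose2 N M).F ↔ z = p := by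
        intro z
        constructor
        · intro hz
          have hzN := comp_pre hopnN hopnM hcomp htN hz
          rcases pre_cases hopnN htN hzN with ⟨hzP, hsk⟩ | ⟨hzI, hconn⟩
          · exact (hsm t htN).1 hsk hpsk_t.2
          · exact absurd ⟨⟨z, hzN, hzI⟩, ⟨y, hyp, hyO⟩⟩ (hopnN.not_both t htN)
        · rintro rfl; exact Or.inl hptN
      have hpost_t : ∀ z, (t, z) ∈ (compose2 N M).F ↔ z = q ∨ z = y := by
        intro z
        constructor
        · intro hz
          have hzN := comp_post hopnN hopnM hcomp htN hz
          rcases post_cases hopnN htN hzN with ⟨hzP, hsk⟩ | ⟨hzO, hconn⟩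
          · exact Or.inl ((hsm t htN).2 hsk hq)
          · obtain ⟨w, hw, huniq⟩ := hportN.one_iface t htN
            exact Or.inr ((huniq z ⟨Or.inr hzO, hconn⟩).trans
              (huniq y ⟨Or.inr hyO, hconn_ty⟩).symm)
        · rintro (rfl | rfl)
          · exact Or.inl hq.1
          · exact Or.inl hyp
      have hpre_t1 : ∀ z, (z, t1) ∈ (compose2 N M).F ↔ z = p ∨ z = x := by
        intro z
        constructor
        · intro hz
          have hzN := comp_pre hopnN hopnM hcomp ht1N hz
          rcases pre_cases hopnN ht1N hzN with ⟨hzP, hsk⟩ | ⟨hzI, hconn⟩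
          · exact Or.inl ((hsm t1 ht1N).1 hsk hpsk_t1)
          · obtain ⟨w, hw, huniq⟩ := hportN.one_iface t1 ht1N
            exact Or.inr ((huniq z ⟨Or.inl hzI, hconn⟩).trans
              (huniq x ⟨Or.inl hxI, hconn_t1x⟩).symm)
        · rintro (rfl | rfl)
          · exact Or.inl hpt1N
          · exact Or.inl hxpre
      have hpost_t1 : ∀ z, (t1, z) ∈ (compose2 N M).F ↔ z = q' := by
        intro z
        constructor
        · intro hz
          have hzN := comp_post hopnN hopnM hcomp ht1N hz
          rcases post_cases hopnN ht1N hzN with ⟨hzP, hsk⟩ | ⟨hzO, hconn⟩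
          · exact (hsm t1 ht1N).2 hsk hq'
          · exact absurd ⟨z, hzN, hzO⟩ hnoO1
        · rintro rfl; exact Or.inl hq'.1
      have hpre_u : ∀ z, (z, u) ∈ (compose2 N M).F ↔ z = q ∨ z = x := by
        intro z
        constructor
        · intro hz
          have hzN := comp_pre hopnN hopnM hcomp huT hz
          rcases pre_cases hopnN huT hzN with ⟨hzP, hsk⟩ | ⟨hzI, hconn⟩
          · exact Or.inl ((hsm u huT).1 hsk hqu)
          · obtain ⟨w, hw, huniq⟩ := hportN.one_iface u huT
            exact Or.inr ((huniq z ⟨Or.inl hzI, hconn⟩).trans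
              (huniq x ⟨Or.inl hxI, hconn_ux⟩).symm)
        · rintro (rfl | rfl)
          · exact Or.inl hqu.1
          · exact Or.inl hxu
      have hpost_u : ∀ z, (u, z) ∈ (compose2 N M).F ↔ z = r := by
        intro z
        constructor
        · intro hz
          have hzN := comp_post hopnN hopnM hcomp huT hz
          rcases post_cases hopnN huT hzN with ⟨hzP, hsk⟩ | ⟨hzO, hconn⟩
          · exact (hsm u huT).2 hsk hru
          · exact absurd ⟨z, hzN, hzO⟩ hpostuO
        · rintro rfl; exact Or.inl hru.1
      have hpre_u' : ∀ z, (z, u') ∈ (compose2 N M).F ↔ z = q' := by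
        intro z
        constructor
        · intro hz
          have hzN := comp_pre hopnN hopnM hcomp hu'T hz
          rcases pre_cases hopnN hu'T hzN with ⟨hzP, hsk⟩ | ⟨hzI, hconn⟩
          · exact (hsm u' hu'T).1 hsk hq'u'
          · exact absurd ⟨⟨z, hzN, hzI⟩, ⟨y, hu'y, hyO⟩⟩ (hopnN.not_both u' hu'T)
        · rintro rfl; exact Or.inl hq'u'.1
      have hpost_u' : ∀ z, (u', z) ∈ (compose2 N M).F ↔ z = r ∨ z = y := by
        intro z
        constructor
        · intro hz
          have hzN := comp_post hopnN hopnM hcomp hu'T hz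
          rcases post_cases hopnN hu'T hzN with ⟨hzP, hsk⟩ | ⟨hzO, hconn⟩
          · exact Or.inl ((hsm u' hu'T).2 hsk hru')
          · obtain ⟨w, hw, huniq⟩ := hportN.one_iface u' hu'T
            exact Or.inr ((huniq z ⟨Or.inr hzO, hconn⟩).trans
              (huniq y ⟨Or.inr hyO, hconn_u'y⟩).symm)
        · rintro (rfl | rfl)
          · exact Or.inl hru'.1
          · exact Or.inl hu'y
      -- numeric facts
      have hmp : 1 ≤ m p := hen p hpt
      have hmx : 1 ≤ m x := hen1 x (Or.inl hxpre)
      -- u' is enabled at m1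
      have hfu' : Fires (compose2 N M).T (compose2 N M).F m1 u' (fireAt (compose2 N M).F m1 u') := by
        refine ⟨Or.inl hu'T, ?_, rfl⟩
        intro z hz
        rw [hpre_u' z] at hz
        rw [hz, hm1]
        unfold fireAt
        rw [if_pos ((hpost_t1 q').mpr rfl)]
        split_ifs <;> omega
      obtain ⟨mn', ts'', tbar, hseq'', hfbar, htbarN, hmu2, hdir2, hfa⟩ :=
        ih m1 mn (fireAt (compose2 N M).F m1 u') u' hseq' htsN' htsrec' hu'T hdiru' hfu'
      -- u is enabled at m'
      have hfu : Fires (compose2 N M).T (compose2 N M).F m' u (fireAt (compose2 N M).F m' u) := by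
        refine ⟨Or.inl huT, ?_, rfl⟩
        intro z hz
        rw [hpre_u z] at hz
        rw [hm']
        rcases hz with h | h <;> rw [h] <;> unfold fireAt
        · rw [if_pos ((hpost_t q).mpr (Or.inl rfl))]
          split_ifs <;> omega
        · rw [if_neg (fun hc => (hne_PI p x hpP hxI) ((hpre_t x).mp hc).symm)]
          have := hmx
          split_ifs <;> omega
      -- key marking equality
      have hkey : fireAt (compose2 N M).F m' u = fireAt (compose2 N M).F m1 u' := by
        rw [hm', hm1]
        exact fire_comm (compose2 N M).F m t t1 u u' p q q' r x y
          hpre_t hpost_t hpre_t1 hpost_t1 hpre_u hpost_u hpre_u' hpost_u'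
          hmp hmx
          (hne_PI p x hpP hxI) (hne_PI q x hqP hxI) (hne_PI q' x hq'P hxI)
          (hne_PI r x hrP hxI) (hne_PO p y hpP hyO) (hne_PO q y hqP hyO)
          (hne_PO q' y hq'P hyO) (hne_PO r y hrP hyO) hxy
      refine ⟨mn', u :: ts'', tbar, FireSeq.cons (hkey ▸ hfu) hseq'', hfbar, htbarN,
        hmu_tu'.trans hmu2, by rw [htsend, ← hdir2, hdiru'], ?_⟩
      exact List.Forall₂.cons ⟨huT, hmu_t1u, by rw [ht1rec, hdiru]⟩ hfa
    · -- commuting case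
      push_neg at hconf
      have henA : ∀ z, (z, t) ∈ (compose2 N M).F → 1 ≤ m1 z := by
        intro z hz
        have h1 := hen z hz
        have h2 : (z, t1) ∉ (compose2 N M).F := hconf z hz
        rw [hm1]
        unfold fireAt
        rw [if_neg h2]
        split_ifs <;> omega
      have hfm1 : Fires (compose2 N M).T (compose2 N M).F m1 t (fireAt (compose2 N M).F m1 t) :=
        ⟨htS, henA, rfl⟩
      obtain ⟨mn', ts'', tbar, hseq'', hfbar, htbarN, hmu2, hdir2, hfa⟩ :=
        ih m1 mn (fireAt (compose2 N M).F m1 t) t hseq' htsN' htsrec' htN htsend hfm1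
      have hcomm : fireAt (compose2 N M).F m' t1 = fireAt (compose2 N M).F m1 t := by
        rw [hm', hm1]
        funext z
        by_cases hA : (z, t) ∈ (compose2 N M).F <;>
          by_cases hC : (z, t1) ∈ (compose2 N M).F
        · exact absurd hC (hconf z hA)
        · have := hen z hA
          simp only [fireAt, hA, hC, if_true, if_false]
          split_ifs <;> omega
        · have := hen1 z hC
          simp only [fireAt, hA, hC, if_true, if_false]
          split_ifs <;> omega
        · simp only [fireAt, hA, hC, if_true, if_false]
          split_ifs <;> omega
      have hf1' : Fires (compose2 N M).T (compose2 N M).F m' t1 (fireAt (compose2 N M).F m1 t) := by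
        refine ⟨ht1S, ?_, hcomm.symm⟩
        intro z hz
        have h1 := hen1 z hz
        have h2 : (z, t) ∉ (compose2 N M).F := fun hc => hconf z hc hz
        rw [hm']
        unfold fireAt
        rw [if_neg h2]
        split_ifs <;> omega
      exact ⟨mn', t1 :: ts'', tbar, FireSeq.cons hf1' hseq'', hfbar, htbarN, hmu2, hdir2,
        List.Forall₂.cons ⟨ht1N, rfl, rfl⟩ hfa⟩


/-- diamond path lemma: in the composition of a well-formed labeled portnet
`N` and its well-formed partial mirror `(M, φ)`, a sequence of receive transitions of `N`
followed by an enabled send transition `t` of `N` can be reorganized: the send can be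
postponed, firing label- and direction-matching transitions instead. -/
theorem diamond_path {Node L : Type} (N M : OPN Node L) (φ : Node → Node)
    (hN : WellFormed N) (hM : WellFormed M)
    (hmir : IsPartialMirror N M φ) (hcomp : Composable N M)
    (m mn m' : Node → ℕ) (ts : List Node) (t : Node)
    (hreach : Reach (compose2 N M).T (compose2 N M).F (mark N.init + mark M.init) m)
    (hseq : FireSeq (compose2 N M).T (compose2 N M).F m ts mn)
    (htsN : ∀ x ∈ ts, x ∈ N.T) (htsrec : ∀ x ∈ ts, dir N x = Dir.receive)
    (htN : t ∈ N.T) (htsend : dir N t = Dir.send)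
    (hfire : Fires (compose2 N M).T (compose2 N M).F m t m') :
    ∃ (mn' : Node → ℕ) (ts' : List Node) (tbar : Node),
      FireSeq (compose2 N M).T (compose2 N M).F m' ts' mn' ∧
      Fires (compose2 N M).T (compose2 N M).F mn tbar mn' ∧
      tbar ∈ N.T ∧ N.μ t = N.μ tbar ∧ dir N t = dir N tbar ∧
      List.Forall₂ (fun a b => b ∈ N.T ∧ N.μ a = N.μ b ∧ dir N a = dir N b) ts ts' :=
  diamond_ind N M hN hM hcomp ts m mn m' t hseq htsN htsrec htN htsend hfire

end PortNets
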